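/- Let n ≥ 2 and let λ_0, …, λ_n be pairwise distinct complex numbers, and set L = {[y_0 : ⋯ : y_n] ∈ ℙ(ℂ^{n+1}) : ∑_{i=0}^n λ_i^k y_i = 0 for every k = 0, …, n−2}. Then for each index i ∈ {0, …, n} there is exactly one point [y] ∈ L with y_i = 0, and this point satisfies y_j ≠ 0 for every j ≠ i. Consequently the n+1 points of L obtained in this way (one for each i) are pairwise distinct. -/

import Mathlib

open Polynomial Finset

/-- The projective line `L ⊂ ℙ(ℂ^{n+1})` cut out by the linear equations
`∑ i, λ_i^k y_i = 0` for `k = 0, …, n-2`; it is the image of the Humbert–Edge curve of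
type `n` under the squaring map. -/
def humbertLine (n : ℕ) (lam : Fin (n + 1) → ℂ) :
    Set (Projectivization ℂ (Fin (n + 1) → ℂ)) :=
  {Q | ∀ k < n - 1, ∑ i, lam i ^ k * Q.rep i = 0}

/-- Vandermonde-type vanishing: a vector supported on at most `n-1` coordinates
satisfying the equations is zero. -/
lemma vand_aux (n : ℕ) (hn : 2 ≤ n) (lam : Fin (n + 1) → ℂ)
    (hlam : Function.Injective lam) (y : Fin (n + 1) → ℂ) (S : Finset (Fin (n + 1)))
    (hS : S.card ≤ n - 1) (hsupp : ∀ j ∉ S, y j = 0)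
    (heq : ∀ k < n - 1, ∑ j, lam j ^ k * y j = 0) : y = 0 := by
  funext j0
  by_cases hj0 : j0 ∈ S
  · set p : ℂ[X] := ∏ l ∈ S.erase j0, (X - C (lam l)) with hp
    have hdeg : p.natDegree < n - 1 := by
      have : p.natDegree = (S.erase j0).card := by
        rw [hp]
        rw [Polynomial.natDegree_prod _ _ (fun l _ => X_sub_C_ne_zero (lam l))]
        simp [Polynomial.natDegree_X_sub_C]
      rw [this]
      have := Finset.card_erase_of_mem hj0
      omega
    have hsum0 : ∑ j, y j * p.eval (lam j) = 0 := by
      have hev : ∀ j : Fin (n + 1), y j * p.eval (lam j)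
          = ∑ k ∈ Finset.range (n - 1), y j * (p.coeff k * lam j ^ k) := by
        intro j
        rw [Polynomial.eval_eq_sum_range' hdeg, Finset.mul_sum]
      simp_rw [hev]
      rw [Finset.sum_comm]
      refine Finset.sum_eq_zero fun k hk => ?_
      have h0 := heq k (Finset.mem_range.mp hk)
      calc ∑ j, y j * (p.coeff k * lam j ^ k) = p.coeff k * ∑ j, lam j ^ k * y j := by
            rw [Finset.mul_sum]; exact Finset.sum_congr rfl fun j _ => by ring
        _ = 0 := by rw [h0, mul_zero]
    have hsingle : ∑ j, y j * p.eval (lam j) = y j0 * p.eval (lam j0) := by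
      refine Finset.sum_eq_single j0 (fun j _ hne => ?_) (by simp)
      by_cases hjS : j ∈ S
      · have hmem : j ∈ S.erase j0 := Finset.mem_erase.mpr ⟨hne, hjS⟩
        have : p.eval (lam j) = 0 := by
          rw [hp, Polynomial.eval_prod]
          exact Finset.prod_eq_zero hmem (by simp)
        rw [this, mul_zero]
      · rw [hsupp j hjS, zero_mul]
    have hne0 : p.eval (lam j0) ≠ 0 := by
      rw [hp, Polynomial.eval_prod]
      refine Finset.prod_ne_zero_iff.mpr fun l hl => ?_
      have : l ≠ j0 := Finset.ne_of_mem_erase hl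
      simpa using sub_ne_zero.mpr fun h => this (hlam (h.symm : lam l = lam j0))
    have : y j0 * p.eval (lam j0) = 0 := by rw [← hsingle, hsum0]
    have := mul_eq_zero.mp this
    simpa [hne0] using this
  · exact hsupp j0 hj0

/-- Solutions vanishing at `i` are nonzero away from `i`. -/
lemma sol_nonvanish {n : ℕ} (hn : 2 ≤ n) {lam : Fin (n + 1) → ℂ} (hlam : Function.Injective lam) (i : Fin (n + 1)) (y : Fin (n + 1) → ℂ) (hy : y ≠ 0)
    (heq : ∀ k < n - 1, ∑ j, lam j ^ k * y j = 0) (hi : y i = 0) :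
    ∀ j, j ≠ i → y j ≠ 0 := by
  intro j hji hyj
  apply hy
  refine vand_aux n hn lam hlam y ((Finset.univ.erase i).erase j) ?_ ?_ heq
  · have hij : i ∈ (Finset.univ : Finset (Fin (n + 1))) := Finset.mem_univ i
    rw [Finset.card_erase_of_mem (Finset.mem_erase.mpr ⟨hji, Finset.mem_univ j⟩),
      Finset.card_erase_of_mem hij, Finset.card_univ, Fintype.card_fin]
    omega
  · intro l hl
    simp only [Finset.mem_erase, Finset.mem_univ, and_true, not_and, not_not] at hl
    by_cases h1 : l = j
    · rw [h1]; exact hyj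
    · rw [hl h1]; exact hi

/-- Existence of a nonzero solution, via rank-nullity. -/
lemma sol_exists {n : ℕ} (hn : 2 ≤ n) (lam : Fin (n + 1) → ℂ) (i : Fin (n + 1)) :
    ∃ v : Fin (n + 1) → ℂ, v ≠ 0 ∧ (∀ k < n - 1, ∑ j, lam j ^ k * v j = 0) ∧ v i = 0 := by
  classical
  set M : Matrix (Fin n) (Fin (n + 1)) ℂ :=
    fun k j => if (k : ℕ) < n - 1 then lam j ^ (k : ℕ) else (if j = i then 1 else 0) with hM
  have hker : LinearMap.ker M.mulVecLin ≠ ⊥ := by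
    intro hbot
    have hinj : Function.Injective M.mulVecLin := by
      rwa [← LinearMap.ker_eq_bot]
    have hle := LinearMap.finrank_le_finrank_of_injective hinj
    have h1 : Module.finrank ℂ (Fin (n + 1) → ℂ) = n + 1 := by
      simp [Module.finrank_fintype_fun_eq_card]
    have h2 : Module.finrank ℂ (Fin n → ℂ) = n := by
      simp [Module.finrank_fintype_fun_eq_card]
    rw [h1, h2] at hle
    omega
  obtain ⟨v, hv, hv0⟩ := (Submodule.ne_bot_iff _).mp hker
  have hvec : M.mulVec v = 0 := hv
  refine ⟨v, hv0, fun k hk => ?_, ?_⟩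
  · have hkn : k < n := by omega
    have := congrFun hvec ⟨k, hkn⟩
    simpa [Matrix.mulVec, dotProduct, hM, hk] using this
  · have hn1 : n - 1 < n := by omega
    have := congrFun hvec ⟨n - 1, hn1⟩
    simp only [Matrix.mulVec, dotProduct, hM, Pi.zero_apply] at this
    simpa [lt_irrefl, Finset.sum_ite_eq'] using this

/-- Proportionality of two solutions. -/
lemma sol_prop {n : ℕ} (hn : 2 ≤ n) {lam : Fin (n + 1) → ℂ} (hlam : Function.Injective lam) (i : Fin (n + 1)) (y y' : Fin (n + 1) → ℂ) (hy : y ≠ 0)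
    (heq : ∀ k < n - 1, ∑ j, lam j ^ k * y j = 0) (hi : y i = 0)
    (heq' : ∀ k < n - 1, ∑ j, lam j ^ k * y' j = 0) (hi' : y' i = 0) :
    ∃ c : ℂ, y' = c • y := by
  obtain ⟨j0, hj0⟩ : ∃ j0 : Fin (n + 1), j0 ≠ i :=
    Fintype.exists_ne_of_one_lt_card (by simp; omega) i
  have hyj0 : y j0 ≠ 0 := sol_nonvanish hn hlam i y hy heq hi j0 hj0
  refine ⟨y' j0 / y j0, ?_⟩
  by_contra hne
  set z : Fin (n + 1) → ℂ := y' - (y' j0 / y j0) • y with hz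
  have hz0 : z ≠ 0 := fun h => hne (by rwa [hz, sub_eq_zero] at h)
  have hzeq : ∀ k < n - 1, ∑ j, lam j ^ k * z j = 0 := by
    intro k hk
    have h1 := heq k hk; have h2 := heq' k hk
    have : ∑ j, lam j ^ k * z j
        = (∑ j, lam j ^ k * y' j) - (y' j0 / y j0) * ∑ j, lam j ^ k * y j := by
      rw [Finset.mul_sum, ← Finset.sum_sub_distrib]
      exact Finset.sum_congr rfl fun j _ => by simp [hz]; ring
    rw [this, h1, h2, mul_zero, sub_zero]
  have hzi : z i = 0 := by simp [hz, hi, hi']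
  have hzj0 : z j0 = 0 := by
    simp only [hz, Pi.sub_apply, Pi.smul_apply, smul_eq_mul]
    field_simp
    ring
  exact sol_nonvanish hn hlam i z hz0 hzeq hzi j0 hj0 hzj0

/-- Let `n ≥ 2` and `λ_0, …, λ_n` pairwise distinct complex numbers.  For
each index `i` there is exactly one point `[y] ∈ L` with `y_i = 0`; this point satisfies
`y_j ≠ 0` for every `j ≠ i`; consequently the `n+1` points of `L` obtained in this way are
pairwise distinct. -/
theorem stmt_8 (n : ℕ) (hn : 2 ≤ n) (lam : Fin (n + 1) → ℂ)
    (hlam : Function.Injective lam) :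
    (∀ i : Fin (n + 1), ∃! Q : Projectivization ℂ (Fin (n + 1) → ℂ),
      Q ∈ humbertLine n lam ∧ Q.rep i = 0) ∧
    (∀ i : Fin (n + 1), ∀ Q ∈ humbertLine n lam, Q.rep i = 0 →
      ∀ j, j ≠ i → Q.rep j ≠ 0) ∧
    (∀ i j : Fin (n + 1), i ≠ j →
      ∀ Q ∈ humbertLine n lam, ∀ Q' ∈ humbertLine n lam,
        Q.rep i = 0 → Q'.rep j = 0 → Q ≠ Q') := by
  have hscale : ∀ (c : ℂ) (w : Fin (n + 1) → ℂ),
      (∀ k < n - 1, ∑ j, lam j ^ k * w j = 0) →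
      ∀ k < n - 1, ∑ j, lam j ^ k * (c • w) j = 0 := by
    intro c w hw k hk
    have : ∑ j, lam j ^ k * (c • w) j = c * ∑ j, lam j ^ k * w j := by
      rw [Finset.mul_sum]
      exact Finset.sum_congr rfl fun j _ => by simp; ring
    rw [this, hw k hk, mul_zero]
  have part2 : ∀ i : Fin (n + 1), ∀ Q ∈ humbertLine n lam, Q.rep i = 0 →
      ∀ j, j ≠ i → Q.rep j ≠ 0 := by
    intro i Q hQ hQi j hji
    exact sol_nonvanish hn hlam i Q.rep Q.rep_nonzero hQ hQi j hji
  refine ⟨?_, part2, ?_⟩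
  · intro i
    obtain ⟨v, hv0, hveq, hvi⟩ := sol_exists hn lam i
    refine ⟨Projectivization.mk ℂ v hv0, ?_, ?_⟩
    · set Q := Projectivization.mk ℂ v hv0 with hQdef
      obtain ⟨a, ha⟩ := (Projectivization.mk_eq_mk_iff ℂ Q.rep v Q.rep_nonzero hv0).mp
        (by rw [Projectivization.mk_rep])
      constructor
      · intro k hk
        rw [← ha]
        have := hscale (a : ℂ) v hveq k hk
        simpa [Units.smul_def] using this
      · rw [← ha]
        simp [Units.smul_def, hvi]
    · rintro Q' ⟨hQ'L, hQ'i⟩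
      set Q := Projectivization.mk ℂ v hv0 with hQdef
      obtain ⟨a, ha⟩ := (Projectivization.mk_eq_mk_iff ℂ Q.rep v Q.rep_nonzero hv0).mp
        (by rw [Projectivization.mk_rep])
      have hQL : Q ∈ humbertLine n lam := by
        intro k hk
        rw [← ha]
        simpa [Units.smul_def] using hscale (a : ℂ) v hveq k hk
      have hQi : Q.rep i = 0 := by rw [← ha]; simp [Units.smul_def, hvi]
      obtain ⟨c, hc⟩ := sol_prop hn hlam i Q.rep Q'.rep Q.rep_nonzero hQL hQi hQ'L hQ'i
      have hc0 : c ≠ 0 := by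
        rintro rfl
        exact Q'.rep_nonzero (by simpa using hc)
      rw [← Projectivization.mk_rep Q', ← Projectivization.mk_rep Q]
      exact (Projectivization.mk_eq_mk_iff ℂ Q'.rep Q.rep Q'.rep_nonzero Q.rep_nonzero).mpr
        ⟨Units.mk0 c hc0, by simpa [Units.smul_def] using hc.symm⟩
  · intro i j hij Q hQ Q' hQ' hQi hQ'j heq
    subst heq
    exact part2 i Q hQ hQi j (fun h => hij h.symm) hQ'j
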